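/- arXiv:math/9805080 — 4 statements merged into one kernel-verified Lean document; each statement's English description precedes it below -/
import Mathlib

section
/- A polynomial map f : ℂ^k → ℂ^k whose components are polynomials of degree d ≥ 2 is regular (i.e., its homogeneous part f_h of degree d satisfies f_h⁻¹(0) = {0}) if and only if liminf_{|z|→∞} |f(z)|/|z|^d > 0. -/
open Filter

/-- Evaluation of a `k`-tuple of polynomials in `k` variables as a self-map of `ℂ^k`. -/
noncomputable def evalMap {k : ℕ} (F : Fin k → MvPolynomial (Fin k) ℂ)
    (z : EuclideanSpace ℂ (Fin k)) : EuclideanSpace ℂ (Fin k) :=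
  (WithLp.equiv 2 (Fin k → ℂ)).symm fun i =>
    MvPolynomial.eval ((WithLp.equiv 2 (Fin k → ℂ)) z) (F i)

namespace RegularAux

open MvPolynomial

lemma coord_le_norm {k : ℕ} (z : EuclideanSpace ℂ (Fin k)) (i : Fin k) : ‖z i‖ ≤ ‖z‖ := by
  rw [EuclideanSpace.norm_eq]
  rw [show ‖z i‖ = Real.sqrt (‖z i‖ ^ 2) by rw [Real.sqrt_sq (norm_nonneg _)]]
  apply Real.sqrt_le_sqrt
  exact Finset.single_le_sum (f := fun j => ‖z j‖ ^ 2) (fun j _ => by positivity) (Finset.mem_univ i)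

lemma norm_le_sum_coord {k : ℕ} (v : EuclideanSpace ℂ (Fin k)) : ‖v‖ ≤ ∑ i, ‖v i‖ := by
  have hv : v = ∑ i, EuclideanSpace.single i (v i) := by
    ext j
    have : (∑ i : Fin k, EuclideanSpace.single i (v i)) j
        = ∑ i : Fin k, (EuclideanSpace.single i (v i) : EuclideanSpace ℂ (Fin k)) j :=
      by rw [WithLp.ofLp_sum]; exact Finset.sum_apply j _ _
    rw [this]
    simp [EuclideanSpace.single_apply]
  calc ‖v‖ = ‖∑ i, EuclideanSpace.single i (v i)‖ := by rw [← hv]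
    _ ≤ ∑ i, ‖EuclideanSpace.single i (v i)‖ := norm_sum_le _ _
    _ = ∑ i, ‖v i‖ := by simp [EuclideanSpace.norm_single]

lemma eval_homog_smul {k n : ℕ} {p : MvPolynomial (Fin k) ℂ} (hp : p.IsHomogeneous n)
    (c : ℂ) (x : Fin k → ℂ) : eval (c • x) p = c ^ n * eval x p := by
  rw [eval_eq, eval_eq, Finset.mul_sum]
  refine Finset.sum_congr rfl fun m hm => ?_
  have hdeg : (∑ i ∈ m.support, m i) = n := by
    have := hp (mem_support_iff.mp hm)
    rw [← this]; show _ = Finsupp.weight (fun _ => 1) m; rw [← Finsupp.degree_eq_weight_one]; rfl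
  have : ∏ i ∈ m.support, (c • x) i ^ m i = c ^ n * ∏ i ∈ m.support, x i ^ m i := by
    simp only [Pi.smul_apply, smul_eq_mul, mul_pow, Finset.prod_mul_distrib]
    rw [Finset.prod_pow_eq_pow_sum, hdeg]
  rw [this]; ring

lemma eval_norm_le {k n : ℕ} (p : MvPolynomial (Fin k) ℂ) (hn : p.totalDegree ≤ n)
    (z : EuclideanSpace ℂ (Fin k)) (hz : 1 ≤ ‖z‖) :
    ‖eval ((WithLp.equiv 2 (Fin k → ℂ)) z) p‖ ≤ (∑ m ∈ p.support, ‖coeff m p‖) * ‖z‖ ^ n := by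
  rw [eval_eq, Finset.sum_mul]
  refine le_trans (norm_sum_le _ _) (Finset.sum_le_sum fun m hm => ?_)
  rw [norm_mul]
  refine mul_le_mul_of_nonneg_left ?_ (norm_nonneg _)
  calc ‖∏ i ∈ m.support, (WithLp.equiv 2 (Fin k → ℂ)) z i ^ m i‖
      = ∏ i ∈ m.support, ‖z i‖ ^ m i := by
        rw [norm_prod]; exact Finset.prod_congr rfl fun i _ => by rw [norm_pow]; rfl
    _ ≤ ∏ i ∈ m.support, ‖z‖ ^ m i := by
        refine Finset.prod_le_prod (fun i _ => by positivity) fun i _ => ?_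
        exact pow_le_pow_left₀ (norm_nonneg _) (coord_le_norm z i) _
    _ = ‖z‖ ^ (∑ i ∈ m.support, m i) := by rw [Finset.prod_pow_eq_pow_sum]
    _ ≤ ‖z‖ ^ n := pow_le_pow_right₀ hz (le_trans (MvPolynomial.le_totalDegree hm) hn)

lemma evalMap_apply {k : ℕ} (F : Fin k → MvPolynomial (Fin k) ℂ)
    (z : EuclideanSpace ℂ (Fin k)) (i : Fin k) :
    evalMap F z i = eval ((WithLp.equiv 2 (Fin k → ℂ)) z) (F i) := rfl

lemma evalMap_norm_le {k n : ℕ} (G : Fin k → MvPolynomial (Fin k) ℂ)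
    (hG : ∀ i, (G i).totalDegree ≤ n) :
    ∃ C : ℝ, 0 ≤ C ∧ ∀ z : EuclideanSpace ℂ (Fin k), 1 ≤ ‖z‖ →
      ‖evalMap G z‖ ≤ C * ‖z‖ ^ n := by
  refine ⟨∑ i, ∑ m ∈ (G i).support, ‖coeff m (G i)‖, by positivity, fun z hz => ?_⟩
  calc ‖evalMap G z‖ ≤ ∑ i, ‖evalMap G z i‖ := norm_le_sum_coord _
    _ ≤ ∑ i, (∑ m ∈ (G i).support, ‖coeff m (G i)‖) * ‖z‖ ^ n :=
        Finset.sum_le_sum fun i _ => eval_norm_le (G i) (hG i) z hz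
    _ = (∑ i, ∑ m ∈ (G i).support, ‖coeff m (G i)‖) * ‖z‖ ^ n := by rw [Finset.sum_mul]

lemma evalMap_add {k : ℕ} (F G : Fin k → MvPolynomial (Fin k) ℂ)
    (z : EuclideanSpace ℂ (Fin k)) :
    evalMap (fun i => F i + G i) z = evalMap F z + evalMap G z := by
  ext i
  simp only [evalMap, WithLp.equiv_symm_apply, PiLp.toLp_apply, map_add]
  rfl

lemma evalMap_homog_smul {k d : ℕ} (Fh : Fin k → MvPolynomial (Fin k) ℂ)
    (hFh : ∀ i, (Fh i).IsHomogeneous d) (c : ℂ) (z : EuclideanSpace ℂ (Fin k)) :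
    evalMap Fh (c • z) = c ^ d • evalMap Fh z := by
  ext i
  have : (WithLp.equiv 2 (Fin k → ℂ)) (c • z) = c • (WithLp.equiv 2 (Fin k → ℂ)) z :=
    rfl
  simp only [evalMap, WithLp.equiv_symm_apply, PiLp.toLp_apply, this, eval_homog_smul (hFh i) c]
  rfl

lemma continuous_evalMap {k : ℕ} (F : Fin k → MvPolynomial (Fin k) ℂ) :
    Continuous (evalMap F) := by
  unfold evalMap
  refine (PiLp.continuous_toLp (p := 2) (β := fun _ : Fin k => ℂ)).comp ?_
  refine continuous_pi fun i => ?_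
  exact (MvPolynomial.continuous_eval (F i)).comp (PiLp.continuous_ofLp (p := 2) (β := fun _ : Fin k => ℂ))

end RegularAux

open RegularAux MvPolynomial in
/-- A polynomial map `f : ℂ^k → ℂ^k` whose components are polynomials of degree `d ≥ 2`
is regular (its top-degree homogeneous part `f_h` satisfies `f_h⁻¹(0) = {0}`) iff
`liminf_{|z|→∞} |f(z)|/|z|^d > 0`. -/
theorem regular_iff_liminf_pos {k d : ℕ} (hk : 1 ≤ k) (hd : 2 ≤ d)
    (F : Fin k → MvPolynomial (Fin k) ℂ)
    (hdeg : ∀ i, (F i).totalDegree ≤ d) :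
    (∀ z : EuclideanSpace ℂ (Fin k),
        evalMap (fun i => MvPolynomial.homogeneousComponent d (F i)) z = 0 → z = 0)
      ↔ 0 < Filter.liminf (fun z : EuclideanSpace ℂ (Fin k) => ‖evalMap F z‖ / ‖z‖ ^ d)
            (Filter.comap (fun z : EuclideanSpace ℂ (Fin k) => ‖z‖) Filter.atTop) := by
  classical
  set E := EuclideanSpace ℂ (Fin k)
  set Fh : Fin k → MvPolynomial (Fin k) ℂ := fun i => homogeneousComponent d (F i) with hFh_def
  set G : Fin k → MvPolynomial (Fin k) ℂ := fun i => F i - Fh i with hG_def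
  set L : Filter E := Filter.comap (fun z : E => ‖z‖) Filter.atTop with hL_def
  set h : E → ℝ := fun z => ‖evalMap F z‖ / ‖z‖ ^ d with hh_def
  have hFhhom : ∀ i, (Fh i).IsHomogeneous d := fun i => homogeneousComponent_isHomogeneous d (F i)
  have hsplit : ∀ z : E, evalMap F z = evalMap Fh z + evalMap G z := by
    intro z
    have : (fun i => Fh i + G i) = F := by
      funext i; simp [hG_def]
    rw [← this, evalMap_add]
  -- degree bound for G
  have hGdeg : ∀ i, (G i).totalDegree ≤ d - 1 := by
    intro i
    rw [totalDegree]
    apply Finset.sup_le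
    intro m hm
    have hcoeff : coeff m (G i) ≠ 0 := mem_support_iff.mp hm
    have hcoeffF : coeff m (G i) = coeff m (F i) - if m.degree = d then coeff m (F i) else 0 := by
      simp [hG_def, hFh_def, coeff_homogeneousComponent]
    have hne : m.degree ≠ d := by
      intro hdm
      rw [hcoeffF, if_pos hdm, sub_self] at hcoeff
      exact hcoeff rfl
    have hle : (m.sum fun _ e => e) ≤ d := by
      have hFne : coeff m (F i) ≠ 0 := by
        intro h0
        rw [hcoeffF, h0] at hcoeff
        simp at hcoeff
      exact le_trans (MvPolynomial.le_totalDegree (mem_support_iff.mpr hFne)) (hdeg i)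
    have hdm : (m.sum fun _ e => e) = m.degree := rfl
    omega
  -- the nonzero unit vector
  have hkpos : 0 < k := hk
  obtain ⟨i0⟩ : Nonempty (Fin k) := ⟨⟨0, hkpos⟩⟩
  set u0 : E := EuclideanSpace.single i0 (1 : ℂ) with hu0
  have hu0norm : ‖u0‖ = 1 := by rw [hu0, EuclideanSpace.norm_single]; exact norm_one
  -- NeBot of L
  have hLseq : ∀ z0 : E, z0 ≠ 0 → Tendsto (fun n : ℕ => ((n : ℂ)) • z0) atTop L := by
    intro z0 hz0
    rw [hL_def, tendsto_comap_iff]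
    have : (fun n : ℕ => ‖((n : ℂ)) • z0‖) = fun n : ℕ => (n : ℝ) * ‖z0‖ := by
      funext n; rw [norm_smul, Complex.norm_natCast]
    show Tendsto (fun n : ℕ => ‖((n : ℂ)) • z0‖) atTop atTop
    rw [this]
    exact Tendsto.atTop_mul_const (norm_pos_iff.mpr hz0) tendsto_natCast_atTop_atTop
  have hu0ne : u0 ≠ 0 := by
    intro h0; rw [h0] at hu0norm; simp at hu0norm
  have hLne : L.NeBot := Filter.neBot_of_le (hLseq u0 hu0ne)
  -- upper bound for h along L
  obtain ⟨CF, hCF0, hCFb⟩ := evalMap_norm_le F hdeg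
  have hev_ge : ∀ R : ℝ, ∀ᶠ z : E in L, R ≤ ‖z‖ := by
    intro R
    rw [hL_def, eventually_comap]
    filter_upwards [eventually_ge_atTop R] with r hr z hz
    rw [hz]; exact hr
  have hbddAbove : ∀ᶠ z : E in L, h z ≤ CF := by
    filter_upwards [hev_ge 1] with z hz
    rw [hh_def]
    have hzpos : (0:ℝ) < ‖z‖ ^ d := by positivity
    rw [div_le_iff₀ hzpos]
    exact hCFb z hz
  have hbddBelow : ∀ᶠ z : E in L, (0:ℝ) ≤ h z := by
    filter_upwards with z
    rw [hh_def]; positivity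
  constructor
  · -- regular → liminf positive
    intro hreg
    -- minimum of ‖evalMap Fh ·‖ on the sphere
    have hcont : Continuous fun z : E => ‖evalMap Fh z‖ :=
      (continuous_evalMap Fh).norm
    have hsph : IsCompact (Metric.sphere (0:E) 1) := isCompact_sphere _ _
    have hsphne : (Metric.sphere (0:E) 1).Nonempty := ⟨u0, by simp [hu0norm]⟩
    obtain ⟨u, hu, hmin⟩ := hsph.exists_isMinOn hsphne hcont.continuousOn
    set c : ℝ := ‖evalMap Fh u‖ with hc
    have hune : u ≠ 0 := by
      intro h0
      have := Metric.mem_sphere.mp hu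
      rw [h0] at this; simp at this
    have hcpos : 0 < c := by
      rw [hc, norm_pos_iff]
      intro h0
      exact hune (hreg u h0)
    -- lower bound ‖evalMap Fh z‖ ≥ c * ‖z‖^d
    have hlow : ∀ z : E, z ≠ 0 → c * ‖z‖ ^ d ≤ ‖evalMap Fh z‖ := by
      intro z hz
      set w : E := (‖z‖⁻¹ : ℂ) • z with hw
      have hznorm : (0:ℝ) < ‖z‖ := norm_pos_iff.mpr hz
      have hwnorm : ‖w‖ = 1 := by
        rw [hw, norm_smul]
        simp [norm_inv, hznorm.ne']
        rw [abs_of_pos hznorm, inv_mul_cancel₀ hznorm.ne']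
      have hzw : z = ((‖z‖ : ℂ)) • w := by
        rw [hw, smul_smul]
        rw [show ((‖z‖:ℂ)) * (‖z‖⁻¹ : ℂ) = 1 from mul_inv_cancel₀ (by exact_mod_cast hznorm.ne')]
        rw [one_smul]
      have : evalMap Fh z = ((‖z‖:ℂ)) ^ d • evalMap Fh w := by
        conv_lhs => rw [hzw]
        exact evalMap_homog_smul Fh hFhhom _ w
      rw [this, norm_smul, norm_pow, Complex.norm_real, Real.norm_of_nonneg hznorm.le]
      have : c ≤ ‖evalMap Fh w‖ := hmin (Metric.mem_sphere.mpr (by simp [hwnorm]))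
      nlinarith [pow_pos hznorm d]
    obtain ⟨C, hC0, hCb⟩ := evalMap_norm_le G hGdeg
    -- for ‖z‖ large, h z ≥ c/2
    have hkey : ∀ᶠ z : E in L, c / 2 ≤ h z := by
      filter_upwards [hev_ge (max 1 (2 * C / c))] with z hz
      have hz1 : 1 ≤ ‖z‖ := le_trans (le_max_left _ _) hz
      have hz2 : 2 * C / c ≤ ‖z‖ := le_trans (le_max_right _ _) hz
      have hzpos : (0:ℝ) < ‖z‖ := lt_of_lt_of_le one_pos hz1
      have hzne : z ≠ 0 := by
        intro h0; rw [h0, norm_zero] at hzpos; exact lt_irrefl _ hzpos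
      have hsd : ‖z‖ ^ d = ‖z‖ ^ (d - 1) * ‖z‖ := by
        rw [← pow_succ]
        congr 1
        omega
      have hGle : ‖evalMap G z‖ ≤ C * ‖z‖ ^ (d - 1) := hCb z hz1
      have hfz : c * ‖z‖ ^ d - C * ‖z‖ ^ (d - 1) ≤ ‖evalMap F z‖ := by
        have h1 := hlow z hzne
        calc c * ‖z‖ ^ d - C * ‖z‖ ^ (d - 1)
            ≤ ‖evalMap Fh z‖ - ‖evalMap G z‖ := by
              have := hGle
              linarith
          _ ≤ ‖evalMap Fh z + evalMap G z‖ := by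
              have h2 := norm_add_le (evalMap Fh z + evalMap G z) (-(evalMap G z))
              simp only [add_neg_cancel_right, norm_neg] at h2
              linarith
          _ = ‖evalMap F z‖ := by rw [← hsplit z]
      have hC2 : C * ‖z‖ ^ (d - 1) ≤ (c / 2) * ‖z‖ ^ d := by
        rw [hsd]
        have hCc : C ≤ (c / 2) * ‖z‖ := by
          rw [div_le_iff₀ hcpos] at hz2
          nlinarith
        have hp : (0:ℝ) ≤ ‖z‖ ^ (d - 1) := by positivity
        calc C * ‖z‖ ^ (d - 1) ≤ ((c / 2) * ‖z‖) * ‖z‖ ^ (d - 1) :=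
              mul_le_mul_of_nonneg_right hCc hp
          _ = c / 2 * (‖z‖ ^ (d - 1) * ‖z‖) := by ring
      have hfz2 : (c / 2) * ‖z‖ ^ d ≤ ‖evalMap F z‖ := by
        have : c * ‖z‖ ^ d - (c/2) * ‖z‖ ^ d ≤ c * ‖z‖ ^ d - C * ‖z‖ ^ (d-1) := by linarith
        calc (c / 2) * ‖z‖ ^ d = c * ‖z‖ ^ d - (c/2) * ‖z‖ ^ d := by ring
          _ ≤ ‖evalMap F z‖ := le_trans this hfz
      rw [hh_def]
      rw [le_div_iff₀ (by positivity : (0:ℝ) < ‖z‖ ^ d)]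
      exact hfz2
    have hcob : L.IsCoboundedUnder (· ≥ ·) h :=
      Filter.isCoboundedUnder_ge_of_eventually_le L hbddAbove
    have hll : c / 2 ≤ Filter.liminf h L := Filter.le_liminf_of_le hcob hkey
    exact lt_of_lt_of_le (by linarith) hll
  · -- liminf positive → regular
    intro hlim z0 hz0
    by_contra hz0ne
    obtain ⟨C, hC0, hCb⟩ := evalMap_norm_le G hGdeg
    set ε : ℝ := Filter.liminf h L / 2 with hε
    have hεpos : 0 < ε := by rw [hε]; linarith
    have hz0pos : (0:ℝ) < ‖z0‖ := norm_pos_iff.mpr hz0ne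
    set seq : ℕ → E := fun n => ((n : ℂ)) • z0 with hseq
    have hseqnorm : ∀ n : ℕ, ‖seq n‖ = (n : ℝ) * ‖z0‖ := by
      intro n; rw [hseq]; simp [norm_smul]
    have hseqF : ∀ n : ℕ, evalMap F (seq n) = evalMap G (seq n) := by
      intro n
      rw [hsplit (seq n), hseq]
      have : evalMap Fh (((n:ℂ)) • z0) = ((n:ℂ)) ^ d • evalMap Fh z0 :=
        evalMap_homog_smul Fh hFhhom _ z0
      rw [this, hz0, smul_zero, zero_add]
    -- eventually h (seq n) ≤ ε
    have htends : Tendsto (fun n : ℕ => ‖seq n‖) atTop atTop := by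
      have : (fun n : ℕ => ‖seq n‖) = fun n : ℕ => (n : ℝ) * ‖z0‖ := funext hseqnorm
      rw [this]
      exact Tendsto.atTop_mul_const hz0pos tendsto_natCast_atTop_atTop
    have hev : ∀ᶠ n : ℕ in atTop, h (seq n) ≤ ε := by
      filter_upwards [htends.eventually_ge_atTop (max 1 (C / ε))] with n hn
      have h1 : 1 ≤ ‖seq n‖ := le_trans (le_max_left _ _) hn
      have h2 : C / ε ≤ ‖seq n‖ := le_trans (le_max_right _ _) hn
      have hpos : (0:ℝ) < ‖seq n‖ := lt_of_lt_of_le one_pos h1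
      have hsd : ‖seq n‖ ^ d = ‖seq n‖ ^ (d - 1) * ‖seq n‖ := by
        rw [← pow_succ]; congr 1; omega
      have hb : ‖evalMap F (seq n)‖ ≤ C * ‖seq n‖ ^ (d - 1) := by
        rw [hseqF n]; exact hCb _ h1
      rw [hh_def]
      rw [div_le_iff₀ (by positivity : (0:ℝ) < ‖seq n‖ ^ d)]
      calc ‖evalMap F (seq n)‖ ≤ C * ‖seq n‖ ^ (d - 1) := hb
        _ ≤ (ε * ‖seq n‖) * ‖seq n‖ ^ (d - 1) := by
            have : C ≤ ε * ‖seq n‖ := by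
              rw [div_le_iff₀ hεpos] at h2
              linarith
            exact mul_le_mul_of_nonneg_right this (by positivity)
        _ = ε * ‖seq n‖ ^ d := by rw [hsd]; ring
    -- frequently in L
    have hmap : Filter.map seq atTop ≤ L := (hLseq z0 hz0ne)
    have hfreq : ∃ᶠ z : E in L, h z ≤ ε := by
      have : ∃ᶠ z : E in Filter.map seq atTop, h z ≤ ε :=
        (hev : ∀ᶠ z : E in Filter.map seq atTop, h z ≤ ε).frequently
      exact this.filter_mono hmap
    have hbdd : L.IsBoundedUnder (· ≥ ·) h := ⟨0, hbddBelow⟩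
    have : Filter.liminf h L ≤ ε := Filter.liminf_le_of_frequently_le hfreq hbdd
    rw [hε] at this
    linarith
end

section
/- Let f_h : ℂ^k → ℂ^k be homogeneous of degree d ≥ 2 with f_h⁻¹(0) = {0}. Then the limit G_h(z) := lim_{n→∞} d^{-n} log|f_h^n(z)| exists for every z ≠ 0, the convergence is uniform on compact subsets of ℂ^k \ {0}, and G_h is continuous on ℂ^k \ {0}. -/
open Filter

/-- Evaluating a homogeneous polynomial at a scaled point. -/
lemma hgf_eval_hom {σ : Type*} {d : ℕ} (p : MvPolynomial σ ℂ)
    (h : p.IsHomogeneous d) (c : ℂ) (x : σ → ℂ) :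
    MvPolynomial.eval (fun i => c * x i) p = c ^ d * MvPolynomial.eval x p := by
  rw [MvPolynomial.eval_eq, MvPolynomial.eval_eq, Finset.mul_sum]
  refine Finset.sum_congr rfl fun m hm => ?_
  have hd : ∑ i ∈ m.support, m i = d := by
    have h1 := h (MvPolynomial.mem_support_iff.mp hm)
    have h2 : m.degree = d := by
      rw [Finsupp.degree_eq_weight_one]; exact h1
    simpa [Finsupp.degree_apply] using h2
  calc MvPolynomial.coeff m p * ∏ i ∈ m.support, (c * x i) ^ m i
      = MvPolynomial.coeff m p *
        ((∏ i ∈ m.support, c ^ m i) * ∏ i ∈ m.support, x i ^ m i) := by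
        rw [← Finset.prod_mul_distrib]
        simp_rw [mul_pow]
    _ = c ^ d * (MvPolynomial.coeff m p * ∏ i ∈ m.support, x i ^ m i) := by
        rw [Finset.prod_pow_eq_pow_sum, hd]; ring

/-- A telescoping estimate: if consecutive differences of a real sequence are bounded by a
geometric series, then all differences are bounded. -/
lemma hgf_tele (g : ℕ → ℝ) (D r : ℝ) (hD : 0 ≤ D) (hr0 : 0 ≤ r) (hr1 : r < 1)
    (h : ∀ n, |g (n + 1) - g n| ≤ D * r ^ n) {m n : ℕ} (hmn : m ≤ n) :
    |g n - g m| ≤ D * r ^ m * (1 - r)⁻¹ := by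
  have key : ∀ p : ℕ, |g (m + p) - g m| ≤ D * r ^ m * ∑ j ∈ Finset.range p, r ^ j := by
    intro p
    induction p with
    | zero => simp
    | succ p ih =>
      have h1 := h (m + p)
      calc |g (m + p + 1) - g m| ≤ |g (m + p + 1) - g (m + p)| + |g (m + p) - g m| :=
            abs_sub_le _ _ _
        _ ≤ D * r ^ (m + p) + D * r ^ m * ∑ j ∈ Finset.range p, r ^ j :=
            add_le_add h1 ih
        _ = D * r ^ m * ∑ j ∈ Finset.range (p + 1), r ^ j := by
            rw [Finset.sum_range_succ, pow_add]; ring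
  have hsum : (∑ j ∈ Finset.range (n - m), r ^ j) ≤ (1 - r)⁻¹ := by
    have hsummable : Summable fun j : ℕ => r ^ j := summable_geometric_of_lt_one hr0 hr1
    have h1 := Summable.sum_le_tsum (Finset.range (n - m))
      (fun i _ => pow_nonneg hr0 i) hsummable
    rwa [tsum_geometric_of_lt_one hr0 hr1] at h1
  have h2 := key (n - m)
  rw [Nat.add_sub_cancel' hmn] at h2
  refine h2.trans ?_
  have hDr : 0 ≤ D * r ^ m := by positivity
  exact mul_le_mul_of_nonneg_left hsum hDr

/-- For `f_h` homogeneous of degree `d ≥ 2` with `f_h⁻¹(0) = {0}`, the limit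
`G_h(z) = lim d^{-n} log |f_h^n(z)|` exists for every `z ≠ 0`, the convergence is uniform
on compact subsets of `ℂ^k \ {0}`, and `G_h` is continuous on `ℂ^k \ {0}`. -/
theorem homogeneous_green_function_exists {k d : ℕ} (hk : 1 ≤ k) (hd : 2 ≤ d)
    (F : Fin k → MvPolynomial (Fin k) ℂ)
    (hhom : ∀ i, (F i).IsHomogeneous d)
    (hzero : ∀ z : EuclideanSpace ℂ (Fin k), evalMap F z = 0 → z = 0) :
    ∃ Gh : EuclideanSpace ℂ (Fin k) → ℝ,
      ContinuousOn Gh {z | z ≠ 0} ∧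
      (∀ K : Set (EuclideanSpace ℂ (Fin k)), IsCompact K → K ⊆ {z | z ≠ 0} →
        TendstoUniformlyOn
          (fun n z => ((d : ℝ) ^ n)⁻¹ * Real.log ‖(evalMap F)^[n] z‖) Gh atTop K) ∧
      (∀ z : EuclideanSpace ℂ (Fin k), z ≠ 0 →
        Tendsto (fun n => ((d : ℝ) ^ n)⁻¹ * Real.log ‖(evalMap F)^[n] z‖) atTop
          (nhds (Gh z))) := by
  classical
  haveI : Nonempty (Fin k) := ⟨⟨0, hk⟩⟩
  set f : EuclideanSpace ℂ (Fin k) → EuclideanSpace ℂ (Fin k) := evalMap F with hf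
  set g : ℕ → EuclideanSpace ℂ (Fin k) → ℝ :=
    fun n z => ((d : ℝ) ^ n)⁻¹ * Real.log ‖f^[n] z‖ with hg
  have hd0 : (0 : ℝ) < d := by positivity
  have hdne : (d : ℝ) ≠ 0 := ne_of_gt hd0
  -- continuity of f
  have hfc : Continuous f := by
    rw [hf]
    unfold evalMap
    exact (PiLp.continuous_toLp 2 fun _ : Fin k => ℂ).comp
      (continuous_pi fun i =>
        (MvPolynomial.continuous_eval (p := F i)).comp (PiLp.continuous_ofLp 2 fun _ => ℂ))
  -- homogeneity of f
  have hsmul : ∀ (c : ℂ) (z : EuclideanSpace ℂ (Fin k)), f (c • z) = c ^ d • f z := by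
    intro c z
    rw [hf]
    unfold evalMap
    have h1 : ((WithLp.equiv 2 (Fin k → ℂ)) (c • z))
        = fun j => c * ((WithLp.equiv 2 (Fin k → ℂ)) z) j := by
      rfl
    rw [h1]
    have h2 : (fun i => MvPolynomial.eval
          (fun j => c * ((WithLp.equiv 2 (Fin k → ℂ)) z) j) (F i))
        = c ^ d • fun i => MvPolynomial.eval ((WithLp.equiv 2 (Fin k → ℂ)) z) (F i) := by
      funext i
      simp only [Pi.smul_apply, smul_eq_mul]
      exact hgf_eval_hom (F i) (hhom i) c _
    rw [h2]; rfl
  have hne : ∀ z : EuclideanSpace ℂ (Fin k), z ≠ 0 → f z ≠ 0 :=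
    fun z hz h0 => hz (hzero z h0)
  have hiter : ∀ (n : ℕ) (z : EuclideanSpace ℂ (Fin k)), z ≠ 0 → f^[n] z ≠ 0 := by
    intro n
    induction n with
    | zero => intro z hz; simpa using hz
    | succ n ih =>
      intro z hz
      rw [Function.iterate_succ_apply']
      exact hne _ (ih z hz)
  -- extrema on the unit sphere
  have hsph : IsCompact (Metric.sphere (0 : EuclideanSpace ℂ (Fin k)) 1) :=
    isCompact_sphere 0 1
  have hsne : (Metric.sphere (0 : EuclideanSpace ℂ (Fin k)) 1).Nonempty :=
    NormedSpace.sphere_nonempty.mpr zero_le_one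
  obtain ⟨u, hu, humin⟩ := hsph.exists_isMinOn hsne (hfc.norm.continuousOn)
  obtain ⟨v, hv, hvmax⟩ := hsph.exists_isMaxOn hsne (hfc.norm.continuousOn)
  have hun : ‖u‖ = 1 := mem_sphere_zero_iff_norm.mp hu
  have hvn : ‖v‖ = 1 := mem_sphere_zero_iff_norm.mp hv
  set c : ℝ := ‖f u‖ with hcdef
  set C : ℝ := ‖f v‖ with hCdef
  have hc : 0 < c := by
    apply norm_pos_iff.mpr
    apply hne
    intro h0
    rw [h0] at hun; simp at hun
  have hC : 0 < C := by
    apply norm_pos_iff.mpr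
    apply hne
    intro h0
    rw [h0] at hvn; simp at hvn
  -- the basic bounds
  have hbound : ∀ z : EuclideanSpace ℂ (Fin k), z ≠ 0 →
      c * ‖z‖ ^ d ≤ ‖f z‖ ∧ ‖f z‖ ≤ C * ‖z‖ ^ d := by
    intro z hz
    have hnz : (0 : ℝ) < ‖z‖ := norm_pos_iff.mpr hz
    set w : EuclideanSpace ℂ (Fin k) := ((‖z‖ : ℂ))⁻¹ • z with hwdef
    have hwnorm : ‖w‖ = 1 := by
      rw [hwdef, norm_smul]
      simp [norm_inv, Complex.norm_real, abs_of_pos hnz]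
      field_simp
    have hwmem : w ∈ Metric.sphere (0 : EuclideanSpace ℂ (Fin k)) 1 :=
      mem_sphere_zero_iff_norm.mpr hwnorm
    have hz_eq : z = (‖z‖ : ℂ) • w := by
      rw [hwdef, smul_smul]
      rw [mul_inv_cancel₀ (by exact_mod_cast ne_of_gt hnz), one_smul]
    have hfz : ‖f z‖ = ‖z‖ ^ d * ‖f w‖ := by
      conv_lhs => rw [hz_eq]
      rw [hsmul, norm_smul]
      congr 1
      rw [norm_pow]
      simp [abs_of_pos hnz]
    have hpow : (0 : ℝ) ≤ ‖z‖ ^ d := by positivity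
    constructor
    · rw [hfz]
      have h1 : c ≤ ‖f w‖ := humin hwmem
      nlinarith
    · rw [hfz]
      have h1 : ‖f w‖ ≤ C := hvmax hwmem
      nlinarith
  -- the key log estimate
  set L : ℝ := max |Real.log c| |Real.log C| with hLdef
  have hL0 : 0 ≤ L := le_trans (abs_nonneg _) (le_max_left _ _)
  have hLest : ∀ w : EuclideanSpace ℂ (Fin k), w ≠ 0 →
      |Real.log ‖f w‖ - d * Real.log ‖w‖| ≤ L := by
    intro w hw
    have hwn : 0 < ‖w‖ := norm_pos_iff.mpr hw
    have hfw : 0 < ‖f w‖ := norm_pos_iff.mpr (hne w hw)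
    obtain ⟨hlow, hhigh⟩ := hbound w hw
    have h1 : Real.log c + d * Real.log ‖w‖ ≤ Real.log ‖f w‖ := by
      have := Real.log_le_log (by positivity) hlow
      rwa [Real.log_mul (ne_of_gt hc) (by positivity), Real.log_pow] at this
    have h2 : Real.log ‖f w‖ ≤ Real.log C + d * Real.log ‖w‖ := by
      have := Real.log_le_log hfw hhigh
      rwa [Real.log_mul (ne_of_gt hC) (by positivity), Real.log_pow] at this
    rw [abs_le]
    constructor
    · have := neg_abs_le (Real.log c)
      have := le_max_left |Real.log c| |Real.log C|
      linarith
    · have := le_abs_self (Real.log C)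
      have := le_max_right |Real.log c| |Real.log C|
      linarith
  -- geometric bound on consecutive differences
  set r : ℝ := (d : ℝ)⁻¹ with hrdef
  have hr0 : 0 ≤ r := by positivity
  have hr1 : r < 1 := by
    rw [hrdef]
    rw [inv_lt_one_iff₀]
    right
    exact_mod_cast lt_of_lt_of_le one_lt_two hd
  set D : ℝ := L * r with hDdef
  have hD0 : 0 ≤ D := mul_nonneg hL0 hr0
  have hstep : ∀ (z : EuclideanSpace ℂ (Fin k)), z ≠ 0 → ∀ n,
      |g (n + 1) z - g n z| ≤ D * r ^ n := by
    intro z hz n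
    have hw : f^[n] z ≠ 0 := hiter n z hz
    have hdiff : g (n + 1) z - g n z
        = r ^ (n + 1) * (Real.log ‖f (f^[n] z)‖ - d * Real.log ‖f^[n] z‖) := by
      rw [hg]
      simp only [Function.iterate_succ_apply']
      rw [hrdef]
      rw [← inv_pow, ← inv_pow]
      field_simp
      rw [mul_sub]; congr 1; rw [pow_succ, mul_assoc, one_div, inv_mul_cancel_left₀ hdne]
    rw [hdiff, abs_mul, abs_pow, abs_of_nonneg hr0]
    have h1 := hLest _ hw
    calc r ^ (n + 1) * |Real.log ‖f (f^[n] z)‖ - d * Real.log ‖f^[n] z‖|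
        ≤ r ^ (n + 1) * L := by
          exact mul_le_mul_of_nonneg_left h1 (by positivity)
      _ = D * r ^ n := by rw [hDdef, pow_succ]; ring
  -- uniform Cauchy and pointwise convergence
  have hcauchy : ∀ z : EuclideanSpace ℂ (Fin k), z ≠ 0 → CauchySeq (fun n => g n z) := by
    intro z hz
    apply cauchySeq_of_le_geometric r D hr1
    intro n
    rw [Real.dist_eq, abs_sub_comm]
    exact hstep z hz n
  set Gh : EuclideanSpace ℂ (Fin k) → ℝ :=
    fun z => limUnder atTop (fun n => g n z) with hGh
  have hptwise : ∀ z : EuclideanSpace ℂ (Fin k), z ≠ 0 →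
      Tendsto (fun n => g n z) atTop (nhds (Gh z)) := by
    intro z hz
    exact (hcauchy z hz).tendsto_limUnder
  have hUC : UniformCauchySeqOn g atTop {z : EuclideanSpace ℂ (Fin k) | z ≠ 0} := by
    rw [Metric.uniformCauchySeqOn_iff]
    intro ε hε
    have htend : Tendsto (fun m : ℕ => D * r ^ m * (1 - r)⁻¹) atTop (nhds 0) := by
      have h1 : Tendsto (fun m : ℕ => r ^ m) atTop (nhds 0) :=
        tendsto_pow_atTop_nhds_zero_of_lt_one hr0 hr1
      have h2 := (h1.const_mul D).mul_const (1 - r)⁻¹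
      simpa using h2
    obtain ⟨N, hN⟩ := eventually_atTop.mp (htend.eventually (gt_mem_nhds hε))
    refine ⟨N, fun m hm n hn x hx => ?_⟩
    have hx' : x ≠ 0 := hx
    have h1r : (0 : ℝ) < 1 - r := by linarith
    have key : ∀ a b : ℕ, N ≤ a → a ≤ b → dist (g a x) (g b x) < ε := by
      intro a b ha hab
      rw [Real.dist_eq, abs_sub_comm]
      have h1 := hgf_tele (fun n => g n x) D r hD0 hr0 hr1 (hstep x hx') hab
      have h2 : D * r ^ a * (1 - r)⁻¹ ≤ D * r ^ N * (1 - r)⁻¹ := by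
        have h3 : r ^ a ≤ r ^ N := pow_le_pow_of_le_one hr0 hr1.le ha
        exact mul_le_mul_of_nonneg_right (mul_le_mul_of_nonneg_left h3 hD0)
          (inv_nonneg.mpr h1r.le)
      exact lt_of_le_of_lt (h1.trans h2) (hN N le_rfl)
    rcases le_total m n with h | h
    · exact key m n hm h
    · rw [dist_comm]
      exact key n m hn h
  have hTU : TendstoUniformlyOn g Gh atTop {z : EuclideanSpace ℂ (Fin k) | z ≠ 0} :=
    hUC.tendstoUniformlyOn_of_tendsto fun x hx => hptwise x hx
  have hcont : ∀ n : ℕ, ContinuousOn (g n) {z : EuclideanSpace ℂ (Fin k) | z ≠ 0} := by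
    intro n
    simp only [hg]
    apply ContinuousOn.mul continuousOn_const
    apply ContinuousOn.log
    · exact ((hfc.iterate n).norm).continuousOn
    · intro x hx
      exact norm_ne_zero_iff.mpr (hiter n x hx)
  have hGcont : ContinuousOn Gh {z : EuclideanSpace ℂ (Fin k) | z ≠ 0} :=
    hTU.continuousOn (Eventually.of_forall hcont).frequently
  exact ⟨Gh, hGcont, fun K _ hK => hTU.mono hK, fun z hz => hptwise z hz⟩
end

section
/- Let f = f_h : ℂ^k → ℂ^k be a homogeneous regular polynomial endomorphism of degree d, inducing f_Π : ℙ^{k−1} → ℙ^{k−1} by f_Π[z] = [f(z)]. Then for every z ∈ ℂ^k \ {0} with z not a critical point of f_Π's lift, |det Df(z)| = d · (|f(z)|/|z|)^k · |det Df_Π([z])|, where the Jacobian of f is taken in the Euclidean metric on ℂ^k and the Jacobian of f_Π in the Fubini–Study metric on ℙ^{k−1}. -/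
open Filter

open scoped InnerProductSpace

section Aux

open MvPolynomial

lemma eval_smul_of_isHomogeneous' {k : ℕ} (p : MvPolynomial (Fin k) ℂ) {n : ℕ}
    (hp : p.IsHomogeneous n) (c : ℂ) (x : Fin k → ℂ) :
    MvPolynomial.eval (c • x) p = c ^ n * MvPolynomial.eval x p := by
  rw [MvPolynomial.eval_eq', MvPolynomial.eval_eq', Finset.mul_sum]
  apply Finset.sum_congr rfl
  intro m hm
  have hc : coeff m p ≠ 0 := by
    simpa [MvPolynomial.mem_support_iff] using hm
  have hdeg : ∑ i, m i = n := by
    have h1 := hp hc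
    rw [Pi.one_def, ← Finsupp.degree_eq_weight_one] at h1
    rw [← h1, Finsupp.degree]
    exact (Finset.sum_subset (Finset.subset_univ _) (by
      intro i _ hi
      simpa [Finsupp.mem_support_iff] using hi)).symm
  have : ∀ i : Fin k, (c • x) i ^ m i = c ^ m i * x i ^ m i := by
    intro i; simp [mul_pow]
  simp_rw [this, Finset.prod_mul_distrib, Finset.prod_pow_eq_pow_sum, hdeg]
  ring_nf

lemma evalMap_differentiable {k : ℕ} (F : Fin k → MvPolynomial (Fin k) ℂ) :
    Differentiable ℂ (evalMap F) := by
  have hg : Differentiable ℂ (fun w : Fin k → ℂ => fun i => MvPolynomial.eval w (F i)) :=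
    differentiable_pi.mpr fun i => fun w =>
      ((AnalyticOnNhd.eval_mvPolynomial (F i)) w trivial).differentiableAt
  have h : evalMap F = fun z => (EuclideanSpace.equiv (Fin k) ℂ).symm
      ((fun w : Fin k → ℂ => fun i => MvPolynomial.eval w (F i))
        ((EuclideanSpace.equiv (Fin k) ℂ) z)) := rfl
  rw [h]
  exact fun z => ((EuclideanSpace.equiv (Fin k) ℂ).symm.differentiable.differentiableAt).comp z
    ((hg _).comp z ((EuclideanSpace.equiv (Fin k) ℂ).differentiable.differentiableAt))

lemma evalMap_smul {k d : ℕ} (F : Fin k → MvPolynomial (Fin k) ℂ)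
    (hhom : ∀ i, (F i).IsHomogeneous d) (c : ℂ) (z : EuclideanSpace ℂ (Fin k)) :
    evalMap F (c • z) = c ^ d • evalMap F z := by
  unfold evalMap
  have h1 : (fun i => MvPolynomial.eval ((WithLp.equiv 2 (Fin k → ℂ)) (c • z)) (F i))
      = c ^ d • fun i => MvPolynomial.eval ((WithLp.equiv 2 (Fin k → ℂ)) z) (F i) := by
    funext i
    rw [show (WithLp.equiv 2 (Fin k → ℂ)) (c • z) = c • (WithLp.equiv 2 (Fin k → ℂ)) z from rfl]
    simp only [Pi.smul_apply, smul_eq_mul]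
    exact eval_smul_of_isHomogeneous' (F i) (hhom i) c _
  rw [h1]; rfl

lemma euler_identity' {k d : ℕ} (F : Fin k → MvPolynomial (Fin k) ℂ)
    (hhom : ∀ i, (F i).IsHomogeneous d) (z : EuclideanSpace ℂ (Fin k)) :
    fderiv ℂ (evalMap F) z z = (d : ℂ) • evalMap F z := by
  have hd : HasDerivAt (fun t : ℂ => t • z) z 1 := by
    simpa using (hasDerivAt_id (1:ℂ)).smul_const z
  have hF : HasFDerivAt (evalMap F) (fderiv ℂ (evalMap F) z) ((1:ℂ) • z) := by
    rw [one_smul]; exact (evalMap_differentiable F z).hasFDerivAt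
  have h1 : HasDerivAt (fun t : ℂ => evalMap F (t • z)) (fderiv ℂ (evalMap F) z z) 1 := by
    simpa [Function.comp_def] using hF.comp_hasDerivAt 1 hd
  have h2 : HasDerivAt (fun t : ℂ => evalMap F (t • z)) ((d : ℂ) • evalMap F z) 1 := by
    have heq : (fun t : ℂ => evalMap F (t • z)) = fun t : ℂ => t ^ d • evalMap F z := by
      funext t; exact evalMap_smul F hhom t z
    rw [heq]
    simpa using (hasDerivAt_pow d (1:ℂ)).smul_const (evalMap F z)
  exact h1.unique h2

set_option maxHeartbeats 1000000 in
lemma abs_det_block_formula {k : ℕ} (hk : 1 ≤ k) {d : ℝ} (hd : 0 ≤ d)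
    (A : EuclideanSpace ℂ (Fin k) →ₗ[ℂ] EuclideanSpace ℂ (Fin k))
    (z w : EuclideanSpace ℂ (Fin k)) (hz : z ≠ 0) (hw : w ≠ 0)
    (hA : A z = (d : ℂ) • w)
    (B₁ : OrthonormalBasis (Fin (k - 1)) ℂ ↥((ℂ ∙ z)ᗮ))
    (B₂ : OrthonormalBasis (Fin (k - 1)) ℂ ↥((ℂ ∙ w)ᗮ)) :
    ‖(LinearMap.det A)‖ =
      d * (‖w‖ / ‖z‖) *
        ‖(Matrix.det (LinearMap.toMatrix B₁.toBasis B₂.toBasis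
          (((Submodule.orthogonalProjectionOnto ((ℂ ∙ w)ᗮ)).toLinearMap.comp A).comp
            ((ℂ ∙ z)ᗮ.subtype))))‖ := by
  classical
  have hznorm : (0:ℝ) < ‖z‖ := norm_pos_iff.mpr hz
  have hwnorm : (0:ℝ) < ‖w‖ := norm_pos_iff.mpr hw
  set e : Fin 1 ⊕ Fin (k - 1) → EuclideanSpace ℂ (Fin k) :=
    Sum.elim (fun _ => ((‖z‖ : ℂ))⁻¹ • z) (fun i => (B₁ i : EuclideanSpace ℂ (Fin k))) with he_def
  set u : Fin 1 ⊕ Fin (k - 1) → EuclideanSpace ℂ (Fin k) :=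
    Sum.elim (fun _ => ((‖w‖ : ℂ))⁻¹ • w) (fun i => (B₂ i : EuclideanSpace ℂ (Fin k))) with hu_def
  have hinner_z : ∀ i, ⟪z, (B₁ i : EuclideanSpace ℂ (Fin k))⟫_ℂ = 0 := fun i =>
    Submodule.inner_right_of_mem_orthogonal (Submodule.mem_span_singleton_self z) (B₁ i).2
  have hinner_w : ∀ i, ⟪w, (B₂ i : EuclideanSpace ℂ (Fin k))⟫_ℂ = 0 := fun i =>
    Submodule.inner_right_of_mem_orthogonal (Submodule.mem_span_singleton_self w) (B₂ i).2
  have ortho : ∀ (y : EuclideanSpace ℂ (Fin k)) (hy : y ≠ 0)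
      (B : OrthonormalBasis (Fin (k - 1)) ℂ ↥((ℂ ∙ y)ᗮ)),
      Orthonormal ℂ (Sum.elim (fun _ : Fin 1 => ((‖y‖ : ℂ))⁻¹ • y)
        (fun i => (B i : EuclideanSpace ℂ (Fin k)))) := by
    intro y hy B
    have hynorm : (0:ℝ) < ‖y‖ := norm_pos_iff.mpr hy
    have hinner_y : ∀ i, ⟪y, (B i : EuclideanSpace ℂ (Fin k))⟫_ℂ = 0 := fun i =>
      Submodule.inner_right_of_mem_orthogonal (Submodule.mem_span_singleton_self y) (B i).2
    constructor
    · rintro (i | i)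
      · simp only [Sum.elim_inl, norm_smul, norm_inv, Complex.norm_real, Real.norm_eq_abs,
          abs_of_pos hynorm]
        field_simp
      · exact B.orthonormal.1 i
    · rintro (i | i) (j | j) hij
      · exact absurd (congrArg Sum.inl (Subsingleton.elim i j)) hij
      · simp only [Sum.elim_inl, Sum.elim_inr, inner_smul_left]
        rw [hinner_y j, mul_zero]
      · simp only [Sum.elim_inl, Sum.elim_inr, inner_smul_right]
        rw [← inner_conj_symm, hinner_y i]
        simp
      · have hij' : i ≠ j := fun h => hij (congrArg Sum.inr h)
        simp only [Sum.elim_inr]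
        rw [← Submodule.coe_inner]
        exact B.orthonormal.2 hij'
  have he : Orthonormal ℂ e := ortho z hz B₁
  have hu : Orthonormal ℂ u := ortho w hw B₂
  have hcard : Fintype.card (Fin 1 ⊕ Fin (k - 1)) =
      Module.finrank ℂ (EuclideanSpace ℂ (Fin k)) := by
    simp [finrank_euclideanSpace_fin]
    omega
  set EB := basisOfLinearIndependentOfCardEqFinrank he.linearIndependent hcard with hEB_def
  set UB := basisOfLinearIndependentOfCardEqFinrank hu.linearIndependent hcard with hUB_def
  have hEB : ⇑EB = e := coe_basisOfLinearIndependentOfCardEqFinrank _ _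
  have hUB : ⇑UB = u := coe_basisOfLinearIndependentOfCardEqFinrank _ _
  set EO := EB.toOrthonormalBasis (by rwa [hEB]) with hEO_def
  set UO := UB.toOrthonormalBasis (by rwa [hUB]) with hUO_def
  set N := LinearMap.toMatrix EB UB A with hN_def
  -- entries of N are inner products
  have hNentry : ∀ i j, N i j = ⟪u i, A (e j)⟫_ℂ := by
    intro i j
    rw [hN_def, LinearMap.toMatrix_apply, ← Module.Basis.toBasis_toOrthonormalBasis UB (by rwa [hUB]),
      OrthonormalBasis.coe_toBasis_repr_apply, OrthonormalBasis.repr_apply_apply]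
    congr 1
    · rw [Module.Basis.coe_toOrthonormalBasis, hUB]
    · rw [hEB]
  set P := Submodule.orthogonalProjectionOnto ((ℂ ∙ w)ᗮ) with hP_def
  set M := LinearMap.toMatrix B₁.toBasis B₂.toBasis
      ((P.toLinearMap.comp A).comp ((ℂ ∙ z)ᗮ.subtype)) with hM_def
  set c : ℝ := d * ‖w‖ / ‖z‖ with hc_def
  have hAe : A (e (Sum.inl 0)) = ((c : ℝ) : ℂ) • u (Sum.inl 0) := by
    simp only [he_def, hu_def, Sum.elim_inl, map_smul, hA, smul_smul]
    congr 1
    rw [hc_def]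
    push_cast
    field_simp
    rw [mul_div_mul_right _ _ (show ((‖w‖:ℝ):ℂ) ≠ 0 by exact_mod_cast hwnorm.ne')]
  have hu_inner : ⟪u (Sum.inl 0), u (Sum.inl 0)⟫_ℂ = 1 := by
    have h1 := hu.1 (Sum.inl 0)
    rw [inner_self_eq_norm_sq_to_K, h1]
    norm_num
  -- the (2,1) block vanishes
  have h21 : N.toBlocks₂₁ = 0 := by
    ext i j
    have : N (Sum.inr i) (Sum.inl j) = 0 := by
      rw [hNentry]
      have hj : (j : Fin 1) = 0 := Subsingleton.elim _ _
      rw [hj, hAe, inner_smul_right]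
      have : ⟪u (Sum.inr i), u (Sum.inl 0)⟫_ℂ = 0 := by
        simp only [hu_def, Sum.elim_inr, Sum.elim_inl, inner_smul_right]
        rw [← inner_conj_symm, hinner_w i]
        simp
      rw [this, mul_zero]
    simpa [Matrix.toBlocks₂₁] using this
  -- the (1,1) block determinant
  have h11 : N.toBlocks₁₁.det = ((c : ℝ) : ℂ) := by
    rw [Matrix.det_fin_one]
    show N (Sum.inl 0) (Sum.inl 0) = _
    rw [hNentry, hAe, inner_smul_right, hu_inner, mul_one]
  -- the (2,2) block equals M
  have h22 : N.toBlocks₂₂ = M := by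
    ext i j
    show N (Sum.inr i) (Sum.inr j) = M i j
    rw [hNentry, hM_def, LinearMap.toMatrix_apply, OrthonormalBasis.coe_toBasis,
      OrthonormalBasis.coe_toBasis_repr_apply, OrthonormalBasis.repr_apply_apply]
    simp only [LinearMap.comp_apply, Submodule.subtype_apply, ContinuousLinearMap.coe_coe]
    rw [Submodule.coe_inner]
    have hperp : ⟪A (B₁ j) - (P (A (B₁ j)) : EuclideanSpace ℂ (Fin k)),
        (B₂ i : EuclideanSpace ℂ (Fin k))⟫_ℂ = 0 := Submodule.starProjection_inner_eq_zero (A (B₁ j))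
      ((B₂ i : EuclideanSpace ℂ (Fin k))) (B₂ i).2
    have : ⟪(B₂ i : EuclideanSpace ℂ (Fin k)),
        A ((B₁ j : EuclideanSpace ℂ (Fin k))) - (P (A (B₁ j)) : EuclideanSpace ℂ (Fin k))⟫_ℂ
          = 0 := by
      rw [← inner_conj_symm, hperp]
      simp
    rw [inner_sub_right, sub_eq_zero] at this
    rw [hu_def, he_def]
    simp only [Sum.elim_inr]
    exact this
  have hdetN : N.det = ((c : ℝ) : ℂ) * M.det := by
    conv_lhs => rw [← Matrix.fromBlocks_toBlocks N]
    rw [h21]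
    rw [Matrix.det_fromBlocks_zero₂₁, h11, h22]
  -- change of basis has unimodular determinant
  have habs1 : ‖(UB.toMatrix ⇑EB).det‖ = 1 := by
    have hmem := OrthonormalBasis.toMatrix_orthonormalBasis_mem_unitary UO EO
    rw [hUO_def, Module.Basis.toBasis_toOrthonormalBasis] at hmem
    rw [hEO_def, Module.Basis.coe_toOrthonormalBasis] at hmem
    obtain ⟨h1, -⟩ := Matrix.det_of_mem_unitary hmem
    set x := (UB.toMatrix ⇑EB).det with hx_def
    have h1' : (starRingEnd ℂ) x * x = 1 := h1
    have h2 : (Complex.normSq x : ℂ) = 1 := by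
      rw [← Complex.mul_conj, mul_comm]
      exact h1'
    have h3 : Complex.normSq x = 1 := by exact_mod_cast h2
    rw [Complex.norm_def, h3, Real.sqrt_one]
  have hNdet2 : N.det = LinearMap.det A * (UB.toMatrix ⇑EB).det := by
    rw [hN_def, show A = A ∘ₗ LinearMap.id from (LinearMap.comp_id A).symm]
    rw [LinearMap.toMatrix_comp EB UB UB A LinearMap.id, Matrix.det_mul,
      LinearMap.det_toMatrix, LinearMap.toMatrix_id_eq_basis_toMatrix, LinearMap.comp_id]
  have habs : ‖(LinearMap.det A)‖ = c * ‖M.det‖ := by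
    have e1 : ‖N.det‖ = ‖(LinearMap.det A)‖ * 1 := by
      rw [hNdet2, norm_mul, habs1]
    have e2 : ‖N.det‖ = c * ‖M.det‖ := by
      rw [hdetN, norm_mul, Complex.norm_real, Real.norm_of_nonneg (by positivity)]
    rw [mul_one] at e1
    rw [← e1, e2]
  rw [habs, hc_def]
  ring

end Aux

/-- For a homogeneous regular polynomial endomorphism `f = f_h` of `ℂ^k` of degree `d`,
inducing `f_Π` on `ℙ^{k-1}`, one has
`|det Df(z)| = d · (|f(z)|/|z|)^k · |det Df_Π([z])|` at every noncritical point.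
Here `|det Df_Π([z])|`, the Jacobian of `f_Π` at `[z]` in the Fubini–Study metric, is
expressed through the lift: it equals `(|z|/|f z|)^{k-1}` times the absolute determinant
(computed in orthonormal bases) of the map `z^⊥ → (f z)^⊥` given by `Df(z)` followed by
orthogonal projection. -/
theorem homogeneous_jacobian_formula {k d : ℕ} (hk : 1 ≤ k) (hd : 2 ≤ d)
    (F : Fin k → MvPolynomial (Fin k) ℂ)
    (hhom : ∀ i, (F i).IsHomogeneous d)
    (hzero : ∀ z : EuclideanSpace ℂ (Fin k), evalMap F z = 0 → z = 0)
    (z : EuclideanSpace ℂ (Fin k)) (hz : z ≠ 0)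
    (Jpi : ℝ)
    (hJ : ∃ (B₁ : OrthonormalBasis (Fin (k - 1)) ℂ ↥((ℂ ∙ z)ᗮ))
        (B₂ : OrthonormalBasis (Fin (k - 1)) ℂ ↥((ℂ ∙ (evalMap F z))ᗮ)),
      Jpi = (‖z‖ / ‖evalMap F z‖) ^ (k - 1) *
        ‖(Matrix.det
            (LinearMap.toMatrix B₁.toBasis B₂.toBasis
              (((Submodule.orthogonalProjectionOnto ((ℂ ∙ (evalMap F z))ᗮ)).toLinearMap.comp
                  ((fderiv ℂ (evalMap F) z).toLinearMap)).comp
                ((ℂ ∙ z)ᗮ.subtype))))‖)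
    -- `[z]` is not a critical point of `f_Π`
    (hcrit : Jpi ≠ 0) :
    ‖(LinearMap.det ((fderiv ℂ (evalMap F) z :
        EuclideanSpace ℂ (Fin k) →ₗ[ℂ] EuclideanSpace ℂ (Fin k))))‖ =
      d * (‖evalMap F z‖ / ‖z‖) ^ k * Jpi := by
  obtain ⟨B₁, B₂, hJeq⟩ := hJ
  have hw : evalMap F z ≠ 0 := fun h => hz (hzero z h)
  have hznorm : (0:ℝ) < ‖z‖ := norm_pos_iff.mpr hz
  have hwnorm : (0:ℝ) < ‖evalMap F z‖ := norm_pos_iff.mpr hw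
  have heuler : (fderiv ℂ (evalMap F) z).toLinearMap z = (((d:ℕ):ℝ) : ℂ) • evalMap F z := by
    have := euler_identity' F hhom z
    simpa using this
  have key := abs_det_block_formula hk (show (0:ℝ) ≤ (d:ℕ) by positivity)
    (fderiv ℂ (evalMap F) z).toLinearMap z (evalMap F z) hz hw heuler B₁ B₂
  rw [hJeq]
  rw [show ((fderiv ℂ (evalMap F) z : EuclideanSpace ℂ (Fin k) →ₗ[ℂ]
      EuclideanSpace ℂ (Fin k))) = (fderiv ℂ (evalMap F) z).toLinearMap from rfl, key]
  obtain ⟨m, hm⟩ : ∃ m, k = m + 1 := ⟨k - 1, (Nat.succ_pred_eq_of_pos hk).symm⟩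
  have hm' : k - 1 = m := by omega
  set a := ‖evalMap F z‖ with ha
  set b := ‖z‖ with hb
  set X := ‖(Matrix.det
            (LinearMap.toMatrix B₁.toBasis B₂.toBasis
              (((Submodule.orthogonalProjectionOnto ((ℂ ∙ (evalMap F z))ᗮ)).toLinearMap.comp
                  ((fderiv ℂ (evalMap F) z).toLinearMap)).comp
                ((ℂ ∙ z)ᗮ.subtype))))‖ with hX
  have h1 : (a / b) ^ m * (b / a) ^ m = 1 := by
    rw [← mul_pow, div_mul_div_comm, mul_comm a b, div_self (by positivity), one_pow]
  rw [hm]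
  simp only [Nat.add_sub_cancel]
  rw [pow_succ]
  linear_combination (-((d:ℝ) * (a / b) * X)) * h1
end

section
/- There is no continuous function α : {|ζ| = 1} → ℂ \ {0} satisfying α(ζ)² · α(ζ⁻²)⁻¹ · ζ² = 1 for all ζ on the unit circle. -/
open Complex Set

/-- A continuous real-valued function taking integer values on an interval has equal
values at the endpoints. -/
private lemma intval_const {f : ℝ → ℝ} {a b : ℝ} (hab : a ≤ b)
    (hf : Continuous f) (hi : ∀ t ∈ Icc a b, ∃ n : ℤ, f t = n) :
    f a = f b := by
  by_contra hne
  obtain ⟨m, hm⟩ := hi a ⟨le_refl a, hab⟩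
  obtain ⟨n, hn⟩ := hi b ⟨hab, le_refl b⟩
  rcases lt_or_gt_of_ne hne with h | h
  · have hv : (m : ℝ) + 1/2 ∈ Icc (f a) (f b) := by
      have : (m : ℝ) + 1 ≤ n := by
        have : m < n := by exact_mod_cast hm ▸ hn ▸ h
        exact_mod_cast this
      constructor <;> [linarith [hm]; linarith [hn]]
    obtain ⟨t, ht, hft⟩ := intermediate_value_Icc hab hf.continuousOn hv
    obtain ⟨k, hk⟩ := hi t ht
    rw [hk] at hft
    have : (2 * k : ℝ) = 2 * m + 1 := by linarith
    have : 2 * k = 2 * m + 1 := by exact_mod_cast this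
    omega
  · have hv : (n : ℝ) + 1/2 ∈ Icc (f b) (f a) := by
      have : (n : ℝ) + 1 ≤ m := by
        have : n < m := by exact_mod_cast hn ▸ hm ▸ h
        exact_mod_cast this
      constructor <;> [linarith [hn]; linarith [hm]]
    obtain ⟨t, ht, hft⟩ := intermediate_value_Icc' hab hf.continuousOn hv
    obtain ⟨k, hk⟩ := hi t ht
    rw [hk] at hft
    have : (2 * k : ℝ) = 2 * n + 1 := by linarith
    have : 2 * k = 2 * n + 1 := by exact_mod_cast this
    omega

/-- Local continuous logarithm of a nonvanishing continuous function. -/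
private lemma local_lift {g : ℝ → ℂ} (hg : Continuous g) (h0 : ∀ t, g t ≠ 0) (x : ℝ) :
    ∃ ε > 0, ∃ h : ℝ → ℂ, ContinuousOn h (Icc (x - ε) (x + ε)) ∧
      ∀ t ∈ Icc (x - ε) (x + ε), Complex.exp (h t) = g t := by
  have hx : 0 < ‖g x‖ := by
    simpa [AbsoluteValue.pos_iff] using h0 x
  obtain ⟨δ, hδ, hδ'⟩ := Metric.continuous_iff.mp hg x (‖g x‖) hx
  refine ⟨δ/2, by positivity, fun t => Complex.log (g x) + Complex.log (g t / g x), ?_, ?_⟩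
  · refine continuousOn_const.add (ContinuousOn.clog ((hg.continuousOn).div_const _) ?_)
    intro t ht
    rw [Complex.mem_slitPlane_iff]
    left
    have h1 : dist (g t) (g x) < ‖g x‖ := by
      apply hδ'
      rw [Real.dist_eq, abs_lt]
      rw [mem_Icc] at ht
      constructor <;> linarith [ht.1, ht.2]
    have hd : ‖g t / g x - 1‖ < 1 := by
      rw [div_sub_one (h0 x), norm_div, div_lt_one hx]
      simpa [Complex.dist_eq] using h1
    have h2 := Complex.abs_re_le_norm (g t / g x - 1)
    have h3 : |(g t / g x).re - 1| < 1 := by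
      have : (g t / g x - 1).re = (g t / g x).re - 1 := by simp
      calc |(g t / g x).re - 1| = |(g t / g x - 1).re| := by rw [this]
        _ ≤ ‖g t / g x - 1‖ := h2
        _ < 1 := hd
    linarith [(abs_lt.mp h3).1]
  · intro t _
    rw [Complex.exp_add, Complex.exp_log (h0 x),
      Complex.exp_log (div_ne_zero (h0 t) (h0 x)), mul_comm,
      div_mul_cancel₀ _ (h0 x)]

/-- Extend a function continuous on `[a,b]` to a globally continuous function. -/
private lemma extend_cont {h : ℝ → ℂ} {a b : ℝ} (hab : a ≤ b)
    (hc : ContinuousOn h (Icc a b)) :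
    ∃ h' : ℝ → ℂ, Continuous h' ∧ ∀ t ∈ Icc a b, h' t = h t := by
  refine ⟨fun t => h (max a (min t b)), ?_, ?_⟩
  · exact hc.comp_continuous (by fun_prop)
      (fun t => ⟨le_max_left _ _, max_le hab (min_le_right _ _)⟩)
  · intro t ht
    show h (max a (min t b)) = h t
    rw [min_eq_left ht.2, max_eq_right ht.1]

/-- Glue two logarithm lifts at a common point. -/
private lemma glue_lift {g : ℝ → ℂ} (h0 : ∀ t, g t ≠ 0) {a c b : ℝ} (hac : a ≤ c) (hcb : c ≤ b)
    {h₁ h₂ : ℝ → ℂ} (hc₁ : Continuous h₁) (he₁ : ∀ t ∈ Icc a c, Complex.exp (h₁ t) = g t)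
    (hc₂ : Continuous h₂) (he₂ : ∀ t ∈ Icc c b, Complex.exp (h₂ t) = g t) :
    ∃ h : ℝ → ℂ, Continuous h ∧ ∀ t ∈ Icc a b, Complex.exp (h t) = g t := by
  refine ⟨fun t => if t ≤ c then h₁ t else h₂ t + (h₁ c - h₂ c), ?_, ?_⟩
  · refine Continuous.if_le hc₁ (by fun_prop) continuous_id continuous_const ?_
    intro x hx
    rw [hx]; ring
  · intro t ht
    by_cases htc : t ≤ c
    · simpa [htc] using he₁ t ⟨ht.1, htc⟩
    · push_neg at htc
      simp only [not_le.mpr htc, if_false]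
      rw [Complex.exp_add, Complex.exp_sub, he₂ t ⟨htc.le, ht.2⟩,
        he₁ c ⟨hac, le_refl c⟩, he₂ c ⟨le_refl c, hcb⟩]
      rw [div_self (h0 c), mul_one]

/-- Existence of a continuous logarithm of a nonvanishing continuous function on any
compact interval. -/
private lemma exists_lift {g : ℝ → ℂ} (hg : Continuous g) (h0 : ∀ t, g t ≠ 0)
    {a b : ℝ} (hab : a ≤ b) :
    ∃ h : ℝ → ℂ, Continuous h ∧ ∀ t ∈ Icc a b, Complex.exp (h t) = g t := by
  set T : Set ℝ := {x | x ∈ Icc a b ∧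
    ∃ h : ℝ → ℂ, Continuous h ∧ ∀ t ∈ Icc a x, Complex.exp (h t) = g t} with hT
  have haT : a ∈ T := by
    refine ⟨⟨le_refl a, hab⟩, fun _ => Complex.log (g a), continuous_const, ?_⟩
    intro t ht
    have : t = a := le_antisymm ht.2 ht.1
    rw [this, Complex.exp_log (h0 a)]
  have hbdd : BddAbove T := ⟨b, fun x hx => hx.1.2⟩
  set x₀ := sSup T with hx₀def
  have hax₀ : a ≤ x₀ := le_csSup hbdd haT
  have hx₀b : x₀ ≤ b := csSup_le ⟨a, haT⟩ (fun x hx => hx.1.2)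
  obtain ⟨ε, hε, hloc, hlc, hle⟩ := local_lift hg h0 x₀
  obtain ⟨hloc', hlc', hle'⟩ := extend_cont (by linarith) hlc
  have hle'' : ∀ t ∈ Icc (x₀ - ε) (x₀ + ε), Complex.exp (hloc' t) = g t := by
    intro t ht; rw [hle' t ht]; exact hle t ht
  obtain ⟨y, hyT, hy⟩ := exists_lt_of_lt_csSup ⟨a, haT⟩
    (show x₀ - ε < x₀ by linarith)
  have hyx : y ≤ x₀ := le_csSup hbdd hyT
  obtain ⟨h₁, hc₁, he₁⟩ := hyT.2
  have hay : a ≤ y := hyT.1.1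
  have hx₀T : x₀ ∈ T := by
    refine ⟨⟨hax₀, hx₀b⟩, ?_⟩
    exact glue_lift h0 hay hyx hc₁ he₁ hlc'
      (fun t ht => hle'' t ⟨by linarith [ht.1], by linarith [ht.2]⟩)
  obtain ⟨H, hHc, hHe⟩ := hx₀T.2
  rcases eq_or_lt_of_le hx₀b with heq | hlt
  · exact ⟨H, hHc, by rw [heq] at hHe; exact hHe⟩
  · exfalso
    set z := min (x₀ + ε) b with hz
    have hx₀z : x₀ ≤ z := le_min (by linarith) hlt.le
    have hzb : z ≤ b := min_le_right _ _
    have hzT : z ∈ T := by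
      refine ⟨⟨le_trans hax₀ hx₀z, hzb⟩, ?_⟩
      refine glue_lift h0 hax₀ hx₀z hHc hHe hlc' ?_
      intro t ht
      refine hle'' t ⟨by linarith [ht.1], le_trans ht.2 (min_le_left _ _)⟩
    have : z ≤ x₀ := le_csSup hbdd hzT
    have : x₀ < z := lt_min (by linarith) hlt
    linarith

/-- Winding number obstruction (example after Proposition A.1): there is no continuous
nonvanishing `α` on the unit circle with `α(ζ)² · α(ζ⁻²)⁻¹ · ζ² = 1` for all `|ζ| = 1`. -/
theorem no_circle_solution :
    ¬ ∃ α : ℂ → ℂ, ContinuousOn α {ζ : ℂ | ‖ζ‖ = 1} ∧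
      ∀ ζ : ℂ, ‖ζ‖ = 1 →
        α ζ ≠ 0 ∧ (α ζ) ^ 2 * (α ((ζ ^ 2)⁻¹))⁻¹ * ζ ^ 2 = 1 := by
  rintro ⟨α, hcont, hα⟩
  have hπ : (0:ℝ) < Real.pi := Real.pi_pos
  set g : ℝ → ℂ := fun t => α (Complex.exp (t * Complex.I)) with hgdef
  have hmem : ∀ t : ℝ, ‖Complex.exp ((t:ℂ) * Complex.I)‖ = 1 :=
    fun t => Complex.norm_exp_ofReal_mul_I t
  have hg : Continuous g := by
    refine hcont.comp_continuous (by fun_prop) (fun t => hmem t)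
  have h0 : ∀ t, g t ≠ 0 := fun t => (hα _ (hmem t)).1
  have hrel : ∀ t : ℝ, (g t) ^ 2 * (g (-2 * t))⁻¹ * Complex.exp ((t:ℂ) * Complex.I) ^ 2 = 1 := by
    intro t
    have h2 : ((Complex.exp ((t:ℂ) * Complex.I)) ^ 2)⁻¹
        = Complex.exp (((-2 * t : ℝ):ℂ) * Complex.I) := by
      rw [sq, ← Complex.exp_add, ← Complex.exp_neg]
      congr 1; push_cast; ring
    have := (hα (Complex.exp ((t:ℂ) * Complex.I)) (hmem t)).2
    rwa [h2] at this
  have hper : ∀ t : ℝ, g (t + 2 * Real.pi) = g t := by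
    intro t
    have : ((t + 2 * Real.pi : ℝ):ℂ) * Complex.I
        = (t:ℂ) * Complex.I + 2 * Real.pi * Complex.I := by push_cast; ring
    simp only [hgdef, this, Complex.exp_add, Complex.exp_two_pi_mul_I, mul_one]
  -- continuous logarithm on [-4π, 2π]
  obtain ⟨h, hhc, hhe⟩ := exists_lift hg h0
    (show -(4 * Real.pi) ≤ 2 * Real.pi by linarith)
  set c : ℂ := 2 * Real.pi * Complex.I with hc
  have hcne : c ≠ 0 := by
    simp only [hc]
    refine mul_ne_zero (mul_ne_zero two_ne_zero ?_) Complex.I_ne_zero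
    exact_mod_cast hπ.ne'
  -- periodicity function p
  set p : ℝ → ℝ := fun t => ((h (t + 2 * Real.pi) - h t) / c).re with hp
  have hpc : Continuous p := by fun_prop
  have hpint : ∀ t ∈ Icc (-(4 * Real.pi)) 0,
      ∃ n : ℤ, h (t + 2 * Real.pi) - h t = n * c ∧ p t = n := by
    intro t ht
    have ht1 : t ∈ Icc (-(4 * Real.pi)) (2 * Real.pi) := ⟨ht.1, by linarith [ht.2]⟩
    have ht2 : t + 2 * Real.pi ∈ Icc (-(4 * Real.pi)) (2 * Real.pi) :=
      ⟨by linarith [ht.1], by linarith [ht.2]⟩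
    have hone : Complex.exp (h (t + 2 * Real.pi) - h t) = 1 := by
      rw [Complex.exp_sub, hhe _ ht2, hhe _ ht1, hper t, div_self (h0 t)]
    obtain ⟨n, hn⟩ := Complex.exp_eq_one_iff.mp hone
    refine ⟨n, hn, ?_⟩
    simp only [hp, hn, hc]
    rw [mul_div_assoc, div_self hcne, mul_one, Complex.intCast_re]
  -- the relation function q
  set q : ℝ → ℝ := fun t =>
    ((2 * h t - h (-2 * t) + 2 * (t:ℂ) * Complex.I) / c).re with hq
  have hqc : Continuous q := by fun_prop
  have hqint : ∀ t ∈ Icc 0 (2 * Real.pi),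
      ∃ n : ℤ, 2 * h t - h (-2 * t) + 2 * (t:ℂ) * Complex.I = n * c ∧ q t = n := by
    intro t ht
    have ht1 : t ∈ Icc (-(4 * Real.pi)) (2 * Real.pi) := ⟨by linarith [ht.1], ht.2⟩
    have ht2 : -2 * t ∈ Icc (-(4 * Real.pi)) (2 * Real.pi) :=
      ⟨by linarith [ht.2], by linarith [ht.1]⟩
    have hone : Complex.exp (2 * h t - h (-2 * t) + 2 * (t:ℂ) * Complex.I) = 1 := by
      have e1 : Complex.exp (2 * h t) = Complex.exp (h t) ^ 2 := by
        rw [show (2:ℂ) * h t = h t + h t by ring, Complex.exp_add, sq]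
      have e2 : Complex.exp (2 * (t:ℂ) * Complex.I)
          = Complex.exp ((t:ℂ) * Complex.I) ^ 2 := by
        rw [show (2:ℂ) * (t:ℂ) * Complex.I = (t:ℂ) * Complex.I + (t:ℂ) * Complex.I by ring,
          Complex.exp_add, sq]
      rw [Complex.exp_add, Complex.exp_sub, e1, e2, hhe _ ht1, hhe _ ht2, div_eq_mul_inv]
      exact hrel t
    obtain ⟨n, hn⟩ := Complex.exp_eq_one_iff.mp hone
    refine ⟨n, hn, ?_⟩
    simp only [hq, hn, hc]
    rw [mul_div_assoc, div_self hcne, mul_one, Complex.intCast_re]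
  -- three period integers are equal
  obtain ⟨n₁, hn₁, hpn₁⟩ := hpint (-(4 * Real.pi)) ⟨le_refl _, by linarith⟩
  obtain ⟨n₂, hn₂, hpn₂⟩ := hpint (-(2 * Real.pi)) ⟨by linarith, by linarith⟩
  obtain ⟨n₃, hn₃, hpn₃⟩ := hpint 0 ⟨by linarith, le_refl _⟩
  have e12 : p (-(4 * Real.pi)) = p (-(2 * Real.pi)) := by
    refine intval_const (by linarith) hpc ?_
    intro t ht
    obtain ⟨n, _, hpn⟩ := hpint t ⟨ht.1, by linarith [ht.2]⟩
    exact ⟨n, hpn⟩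
  have e23 : p (-(2 * Real.pi)) = p 0 := by
    refine intval_const (by linarith) hpc ?_
    intro t ht
    obtain ⟨n, _, hpn⟩ := hpint t ⟨by linarith [ht.1], ht.2⟩
    exact ⟨n, hpn⟩
  have hn12 : n₁ = n₂ := by
    have : (n₁:ℝ) = n₂ := by rw [← hpn₁, ← hpn₂, e12]
    exact_mod_cast this
  have hn23 : n₂ = n₃ := by
    have : (n₂:ℝ) = n₃ := by rw [← hpn₂, ← hpn₃, e23]
    exact_mod_cast this
  -- the two relation integers are equal
  obtain ⟨m₀, hm₀, hqm₀⟩ := hqint 0 ⟨le_refl _, by linarith⟩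
  obtain ⟨m₁, hm₁, hqm₁⟩ := hqint (2 * Real.pi) ⟨by linarith, le_refl _⟩
  have e45 : q 0 = q (2 * Real.pi) := by
    refine intval_const (by linarith) hqc ?_
    intro t ht
    obtain ⟨n, _, hqn⟩ := hqint t ht
    exact ⟨n, hqn⟩
  have hm01 : m₀ = m₁ := by
    have : (m₀:ℝ) = m₁ := by rw [← hqm₀, ← hqm₁, e45]
    exact_mod_cast this
  -- assemble the contradiction
  subst hn12 hn23 hm01
  -- rewrite the points
  have ha1 : -(4 * Real.pi) + 2 * Real.pi = -(2 * Real.pi) := by ring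
  have ha2 : -(2 * Real.pi) + 2 * Real.pi = 0 := by ring
  have ha3 : (0:ℝ) + 2 * Real.pi = 2 * Real.pi := by ring
  rw [ha1] at hn₁
  rw [ha2] at hn₂
  rw [ha3] at hn₃
  have hm₀' : 2 * h 0 - h 0 + 0 = (m₀:ℂ) * c := by
    have : ((-2 : ℝ) * 0 : ℝ) = 0 := by ring
    simpa [this] using hm₀
  have hm₁' : 2 * h (2 * Real.pi) - h (-(4 * Real.pi)) + 2 * c = (m₀:ℂ) * c := by
    have h1 : ((-2 : ℝ) * (2 * Real.pi) : ℝ) = -(4 * Real.pi) := by ring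
    have h2 : 2 * ((2 * Real.pi : ℝ):ℂ) * Complex.I = 2 * c := by
      simp only [hc]; push_cast; ring
    rw [h1, h2] at hm₁
    exact hm₁
  have key : ((4 * n₁ + 2 : ℤ) : ℂ) * c = 0 := by
    push_cast
    linear_combination hm₁' - hm₀' - 2 * hn₃ - hn₁ - hn₂
  have : ((4 * n₁ + 2 : ℤ) : ℂ) = 0 := by
    rcases mul_eq_zero.mp key with h' | h'
    · exact h'
    · exact absurd h' hcne
  have : (4 * n₁ + 2 : ℤ) = 0 := by exact_mod_cast this
  omega
end
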